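/- Let R be a unital ring and let n be a nonempty finite index type. Then R is CCR if and only if the matrix ring of n-by-n matrices over R is CCR. -/

import Mathlib

/-- A ring is (left) primitive if it admits a faithful simple left module. -/
def IsPrimitiveRing (R : Type u) [Ring R] : Prop :=
  ∃ (M : Type u) (_ : AddCommGroup M) (_ : Module R M), IsSimpleModule R M ∧ FaithfulSMul R M

/-- A ring has a minimal left ideal if there is an atom in its lattice of left ideals. -/
def HasMinimalLeftIdeal (R : Type u) [Ring R] : Prop :=
  ∃ L : Submodule R R, IsAtom L

/-- A ring is CCR if every primitive quotient is a simple ring with a minimal left ideal. -/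
def IsCCRRing (R : Type u) [Ring R] : Prop :=
  ∀ P : TwoSidedIdeal R, IsPrimitiveRing P.ringCon.Quotient →
    IsSimpleRing P.ringCon.Quotient ∧ HasMinimalLeftIdeal P.ringCon.Quotient

set_option linter.unusedSectionVars false

open Matrix

section QuotEquiv
variable {R : Type*} [Ring R] {n : Type*} [Fintype n] [DecidableEq n]

/-- The quotient of a matrix ring by `Mₙ(I)` is the matrix ring over `R/I`. -/
noncomputable def matricesOverQuotEquiv (I : TwoSidedIdeal R) :
    (I.matrix n).ringCon.Quotient ≃+* Matrix n n I.ringCon.Quotient := by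
  let F : Matrix n n R →+* Matrix n n I.ringCon.Quotient :=
    (RingCon.mk' I.ringCon).mapMatrix
  have hker : ∀ a b : Matrix n n R, (I.matrix n).ringCon a b ↔ F a = F b := by
    intro a b
    rw [TwoSidedIdeal.rel_iff]
    constructor
    · intro h
      ext i j
      have : a i j - b i j ∈ I := by
        simpa using (TwoSidedIdeal.mem_matrix n I _).1 h i j
      exact Quotient.sound ((TwoSidedIdeal.rel_iff _ _ _).2 this)
    · intro h
      rw [TwoSidedIdeal.mem_matrix]
      intro i j
      have : F a i j = F b i j := by rw [h]
      simpa using (TwoSidedIdeal.rel_iff _ _ _).1 (Quotient.exact this)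
  refine RingEquiv.ofBijective
    ({ toFun := Quotient.lift F (fun a b h => (hker a b).1 h)
       map_one' := (map_one F)
       map_mul' := fun x y => Quotient.inductionOn₂ x y (fun a b => map_mul F a b)
       map_zero' := (map_zero F)
       map_add' := fun x y => Quotient.inductionOn₂ x y (fun a b => map_add F a b) } :
      (I.matrix n).ringCon.Quotient →+* Matrix n n I.ringCon.Quotient) ⟨?_, ?_⟩
  · intro x y h
    induction x using Quotient.inductionOn with | h a =>
    induction y using Quotient.inductionOn with | h b =>
    exact Quotient.sound ((hker a b).2 h)
  · intro m
    refine ⟨Quotient.mk _ (fun i j => (m i j).out), ?_⟩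
    ext i j
    show I.ringCon.mk' (Quotient.out (m i j)) = m i j
    exact Quotient.out_eq (m i j)

section Transfer
variable {A B : Type w} [Ring A] [Ring B]

/-- Carry a module structure across a ring equivalence. -/
theorem isPrimitiveRing_of_ringEquiv (e : A ≃+* B) (h : IsPrimitiveRing A) :
    IsPrimitiveRing B := by
  obtain ⟨M, _, _, hs, hf⟩ := h
  letI modB : Module B M := Module.compHom M (e.symm : B →+* A)
  have smul_def : ∀ (b : B) (m : M), b • m = e.symm b • m := fun _ _ => rfl
  refine ⟨M, inferInstance, modB, ?_, ?_⟩
  · haveI : Nontrivial M := IsSimpleModule.nontrivial A M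
    haveI : Nontrivial (Submodule B M) := (Submodule.nontrivial_iff B).2 inferInstance
    refine { eq_bot_or_eq_top := fun N => ?_ }
    · let N' : Submodule A M :=
        { carrier := N
          add_mem' := fun h1 h2 => N.add_mem h1 h2
          zero_mem' := N.zero_mem
          smul_mem' := fun a x hx => by
            have : a • x = (e a) • x := by rw [smul_def, e.symm_apply_apply]
            rw [this]; exact N.smul_mem _ hx }
      rcases eq_bot_or_eq_top N' with h | h
      · left; ext x
        exact Iff.trans (show x ∈ N ↔ x ∈ N' from Iff.rfl) (by rw [h]; rfl)
      · right; ext x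
        exact Iff.trans (show x ∈ N ↔ x ∈ N' from Iff.rfl) (by rw [h]; simp)
  · constructor
    intro b₁ b₂ hb
    have : e.symm b₁ = e.symm b₂ := hf.eq_of_smul_eq_smul (fun m => hb m)
    exact e.symm.injective this

theorem hasMinimalLeftIdeal_of_ringEquiv (e : A ≃+* B) (h : HasMinimalLeftIdeal A) :
    HasMinimalLeftIdeal B := by
  obtain ⟨L, hL⟩ := h
  let f : Submodule A A ≃o Submodule B B :=
    { toFun := fun L =>
        { carrier := e '' L
          add_mem' := by rintro _ _ ⟨x, hx, rfl⟩ ⟨y, hy, rfl⟩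
                         exact ⟨x + y, L.add_mem hx hy, map_add e x y⟩
          zero_mem' := ⟨0, L.zero_mem, map_zero e⟩
          smul_mem' := by rintro b _ ⟨x, hx, rfl⟩
                          refine ⟨e.symm b * x, L.smul_mem _ hx, ?_⟩
                          simp [smul_eq_mul] }
      invFun := fun L =>
        { carrier := e.symm '' L
          add_mem' := by rintro _ _ ⟨x, hx, rfl⟩ ⟨y, hy, rfl⟩
                         exact ⟨x + y, L.add_mem hx hy, map_add e.symm x y⟩
          zero_mem' := ⟨0, L.zero_mem, map_zero e.symm⟩
          smul_mem' := by rintro a _ ⟨x, hx, rfl⟩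
                          refine ⟨e a * x, L.smul_mem _ hx, ?_⟩
                          simp [smul_eq_mul] }
      left_inv := fun L => by
        ext x; constructor
        · rintro ⟨y, ⟨z, hz, rfl⟩, rfl⟩; simpa using hz
        · intro hx; exact ⟨e x, ⟨x, hx, rfl⟩, by simp⟩
      right_inv := fun L => by
        ext x; constructor
        · rintro ⟨y, ⟨z, hz, rfl⟩, rfl⟩; simpa using hz
        · intro hx; exact ⟨e.symm x, ⟨x, hx, rfl⟩, by simp⟩
      map_rel_iff' := by
        intro L₁ L₂
        constructor
        · intro h x hx
          have : e x ∈ (e '' L₂ : Set B) := h ⟨x, hx, rfl⟩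
          obtain ⟨y, hy, hxy⟩ := this
          rwa [← e.injective hxy]
        · rintro h _ ⟨x, hx, rfl⟩
          exact ⟨x, h hx, rfl⟩ }
  exact ⟨f L, (f.isAtom_iff L).2 hL⟩

theorem isSimpleRing_of_ringEquiv (e : A ≃+* B) (h : IsSimpleRing A) : IsSimpleRing B := by
  obtain ⟨hso⟩ := h
  let f : TwoSidedIdeal B ≃o TwoSidedIdeal A :=
    { toFun := fun J => J.comap e
      invFun := fun J => J.comap e.symm
      left_inv := fun J => by ext x; simp [TwoSidedIdeal.mem_comap]
      right_inv := fun J => by ext x; simp [TwoSidedIdeal.mem_comap]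
      map_rel_iff' := by
        intro J₁ J₂
        simp only [Equiv.coe_fn_mk]
        constructor
        · intro h x hx
          have := h (show e.symm x ∈ J₁.comap e by simp [TwoSidedIdeal.mem_comap, hx])
          simpa [TwoSidedIdeal.mem_comap] using this
        · intro h x hx
          rw [TwoSidedIdeal.mem_comap] at hx ⊢
          exact h hx }
  exact ⟨f.isSimpleOrder⟩
end Transfer


open Matrix

section MatMod
variable {S : Type u} [Ring S] {n : Type v} [Fintype n] [DecidableEq n] [Nonempty n]
variable {M : Type w} [AddCommGroup M] [Module S M]

/-- The natural module structure of `Mₙ(S)` on `n → M`. -/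
def matVecModule : Module (Matrix n n S) (n → M) where
  smul A v := fun i => ∑ j, A i j • v j
  one_smul v := by
    funext i
    show ∑ j, (1 : Matrix n n S) i j • v j = v i
    simp [Matrix.one_apply, ite_smul]
  mul_smul A B v := by
    funext i
    show ∑ j, (A * B) i j • v j = ∑ j, A i j • ∑ k, B j k • v k
    simp only [Matrix.mul_apply, Finset.sum_smul, Finset.smul_sum, mul_smul]
    exact Finset.sum_comm
  smul_zero A := by funext i; show ∑ j, A i j • (0 : M) = 0; simp
  smul_add A v w := by
    funext i
    show ∑ j, A i j • (v j + w j) = (∑ j, A i j • v j) + ∑ j, A i j • w j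
    simp [smul_add, Finset.sum_add_distrib]
  add_smul A B v := by
    funext i
    show ∑ j, (A i j + B i j) • v j = (∑ j, A i j • v j) + ∑ j, B i j • v j
    simp [add_smul, Finset.sum_add_distrib]
  zero_smul v := by funext i; show ∑ j, (0 : Matrix n n S) i j • v j = 0; simp

attribute [local instance] matVecModule

lemma matVecModule.smul_def (A : Matrix n n S) (v : n → M) :
    A • v = fun i => ∑ j, A i j • v j := rfl

lemma matVecModule.stdBasis_smul (i j : n) (s : S) (v : n → M) :
    (Matrix.single i j s) • v = Pi.single i (s • v j) := by
  rw [matVecModule.smul_def]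
  funext k
  rcases eq_or_ne k i with rfl | hk
  · rw [Pi.single_eq_same]
    rw [Finset.sum_eq_single j]
    · simp [Matrix.single]
    · intro l _ hl; simp [Matrix.single]; intro h; exact absurd h.symm hl
    · simp
  · rw [Pi.single_eq_of_ne hk]
    apply Finset.sum_eq_zero
    intro l _
    simp only [Matrix.single, of_apply, ite_smul, zero_smul, ite_eq_right_iff, and_imp]
    intro h _; exact absurd h.symm hk

theorem isPrimitiveRing_matrix_of (h : IsPrimitiveRing S) :
    IsPrimitiveRing (Matrix n n S) := by
  obtain ⟨M, _, _, hs, hf⟩ := h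
  haveI : Nontrivial M := IsSimpleModule.nontrivial S M
  refine ⟨n → M, inferInstance, inferInstance, ?_, ?_⟩
  · haveI : Nontrivial (Submodule (Matrix n n S) (n → M)) :=
      (Submodule.nontrivial_iff (Matrix n n S)).2 inferInstance
    refine { eq_bot_or_eq_top := fun N => ?_ }
    -- every submodule is ⊥ or ⊤
    rcases eq_or_ne N ⊥ with rfl | hN
    · exact Or.inl rfl
    right
    obtain ⟨v, hvN, hv0⟩ := Submodule.exists_mem_ne_zero_of_ne_bot hN
    obtain ⟨j, hj⟩ : ∃ j, v j ≠ 0 := by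
      by_contra hc
      push_neg at hc
      exact hv0 (funext hc)
    -- for each i, the set of m with single i m ∈ N is a full submodule
    have key : ∀ (i : n) (m : M), Pi.single i m ∈ N := by
      intro i
      let W : Submodule S M :=
        { carrier := {m | Pi.single i m ∈ N}
          add_mem' := fun {a b} ha hb => by
            show Pi.single i (a + b) ∈ N
            rw [Pi.single_add]; exact N.add_mem ha hb
          zero_mem' := by show Pi.single i (0 : M) ∈ N; simp [Pi.single_zero]
          smul_mem' := fun s m hm => by
            show Pi.single i (s • m) ∈ N
            have := N.smul_mem (Matrix.single i i s) hm
            rwa [matVecModule.stdBasis_smul, Pi.single_eq_same] at this }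
      have hW : W = ⊤ := by
        rcases eq_bot_or_eq_top W with h | h
        · exfalso
          have : v j ∈ W := by
            show Pi.single i (v j) ∈ N
            have := N.smul_mem (Matrix.single i j (1 : S)) hvN
            rwa [matVecModule.stdBasis_smul, one_smul] at this
          rw [h] at this
          exact hj this
        · exact h
      intro m
      have : m ∈ W := hW ▸ Submodule.mem_top
      exact this
    rw [eq_top_iff]
    intro w _
    have : w = ∑ i, Pi.single i (w i) := by
      funext k; rw [Fintype.sum_apply]; simp [Pi.single_apply]
    rw [this]
    exact Submodule.sum_mem N (fun i _ => key i (w i))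
  · constructor
    intro A B hAB
    ext i j
    refine hf.eq_of_smul_eq_smul (fun m => ?_)
    have := congrFun (hAB (Pi.single j m)) i
    simp only [matVecModule.smul_def] at this
    calc A i j • m = ∑ l, A i l • Pi.single j m l := by
          rw [Finset.sum_eq_single j]
          · simp
          · intro l _ hl; simp [Pi.single_eq_of_ne hl]
          · simp
      _ = ∑ l, B i l • Pi.single j m l := this
      _ = B i j • m := by
          rw [Finset.sum_eq_single j]
          · simp
          · intro l _ hl; simp [Pi.single_eq_of_ne hl]
          · simp
end MatMod

section Corner
variable {S : Type u} [Ring S] {n : Type v} [Fintype n] [DecidableEq n] [Nonempty n]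

lemma e_mul_mul_e (i₀ : n) (A : Matrix n n S) :
    Matrix.single i₀ i₀ (1 : S) * A * Matrix.single i₀ i₀ (1 : S)
      = Matrix.single i₀ i₀ (A i₀ i₀) := by
  ext k l
  simp only [mul_apply, Matrix.single, of_apply, ite_and, Finset.sum_ite_eq,
    Finset.sum_ite_eq', ite_mul, zero_mul, one_mul, mul_ite, mul_zero, mul_one,
    Finset.mem_univ, if_true]
  by_cases hk : i₀ = k <;> by_cases hl : i₀ = l <;> simp [hk, hl]

theorem isPrimitiveRing_of_matrix (h : IsPrimitiveRing (Matrix n n S)) :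
    IsPrimitiveRing S := by
  classical
  obtain ⟨V, _, _, hs, hf⟩ := h
  haveI : Nontrivial V := IsSimpleModule.nontrivial (Matrix n n S) V
  haveI ntMat : Nontrivial (Matrix n n S) := by
    rcases exists_ne (0 : V) with ⟨v, hv⟩
    refine ⟨1, 0, fun h10 => hv ?_⟩
    have := congrArg (· • v) h10
    simpa using this
  haveI : Nontrivial S := by
    by_contra hS
    rw [not_nontrivial_iff_subsingleton] at hS
    exact not_subsingleton (Matrix n n S) inferInstance
  obtain ⟨i₀⟩ := ‹Nonempty n›
  set e : Matrix n n S := Matrix.single i₀ i₀ (1 : S) with he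
  have he2 : e * e = e := by
    rw [he, Matrix.single_mul_single_same, one_mul]
  have hE : ∀ s t : S, Matrix.single i₀ i₀ s * Matrix.single i₀ i₀ t
      = Matrix.single i₀ i₀ (s * t) := fun s t => by rw [Matrix.single_mul_single_same]
  -- the corner module
  let G : AddSubgroup V :=
    { carrier := {v | e • v = v}
      add_mem' := fun {a b} ha hb => by simp only [Set.mem_setOf_eq] at *; rw [smul_add, ha, hb]
      zero_mem' := by simp
      neg_mem' := fun {a} ha => by simp only [Set.mem_setOf_eq] at *; rw [smul_neg, ha] }
  letI : Module S G :=
    { smul := fun s v => ⟨Matrix.single i₀ i₀ s • (v : V), by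
        show e • _ = _
        rw [← mul_smul, he, hE, one_mul]⟩
      one_smul := fun v => Subtype.ext (by show Matrix.single i₀ i₀ (1:S) • (v : V) = v; exact v.2)
      mul_smul := fun s t v => Subtype.ext (by
        show Matrix.single i₀ i₀ (s * t) • (v : V)
            = Matrix.single i₀ i₀ s • Matrix.single i₀ i₀ t • (v : V)
        rw [← mul_smul, hE])
      smul_zero := fun s => Subtype.ext (by show _ • (0 : V) = (0 : V); simp)
      smul_add := fun s v w => Subtype.ext (by
        show _ • ((v : V) + w) = _ • (v : V) + _ • (w : V); rw [smul_add])
      add_smul := fun s t v => Subtype.ext (by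
        show Matrix.single i₀ i₀ (s + t) • (v : V)
            = (Matrix.single i₀ i₀ s • (v : V)) + Matrix.single i₀ i₀ t • (v : V)
        rw [Matrix.single_add, add_smul])
      zero_smul := fun v => Subtype.ext (by
        show Matrix.single i₀ i₀ (0 : S) • (v : V) = 0
        rw [Matrix.single_zero, zero_smul]) }
  have smul_coe : ∀ (s : S) (v : G), ((s • v : G) : V) = Matrix.single i₀ i₀ s • (v : V) :=
    fun _ _ => rfl
  -- G is nontrivial
  have he0 : e ≠ 0 := by
    intro h0
    have := congrFun (congrFun h0 i₀) i₀
    simp [he, Matrix.single] at this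
  obtain ⟨v₀, hv₀⟩ : ∃ v : V, e • v ≠ 0 := by
    by_contra hc
    push_neg at hc
    exact he0 (hf.eq_of_smul_eq_smul (fun v => by rw [hc v, zero_smul]))
  have hw : e • (e • v₀) = e • v₀ := by rw [← mul_smul, he2]
  haveI : Nontrivial G := ⟨⟨⟨e • v₀, hw⟩, 0, fun hcon => hv₀ (by
    simpa using congrArg Subtype.val hcon)⟩⟩
  -- G is a simple S-module
  haveI hGsimple : IsSimpleModule S G := by
    haveI : Nontrivial (Submodule S G) := (Submodule.nontrivial_iff S).2 inferInstance
    refine { eq_bot_or_eq_top := fun W => ?_ }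
    rcases eq_or_ne W ⊥ with rfl | hW
    · exact Or.inl rfl
    right
    obtain ⟨m, hmW, hm0⟩ := Submodule.exists_mem_ne_zero_of_ne_bot hW
    have hmV : (m : V) ≠ 0 := fun hc => hm0 (Subtype.ext hc)
    rw [eq_top_iff]
    rintro u -
    -- u = A • m for some A, by simplicity of V
    have hspan : Submodule.span (Matrix n n S) {(m : V)} = ⊤ := by
      rcases eq_bot_or_eq_top (Submodule.span (Matrix n n S) {(m : V)}) with h | h
      · exact absurd (h ▸ Submodule.mem_span_singleton_self (m : V)) (by simp [hmV])
      · exact h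
    have : (u : V) ∈ Submodule.span (Matrix n n S) {(m : V)} := hspan ▸ Submodule.mem_top
    obtain ⟨A, hA⟩ := Submodule.mem_span_singleton.1 this
    have hu : (u : V) = (e * A * e) • (m : V) := by
      rw [mul_smul, mul_smul, m.2, ← mul_smul]
      rw [show (e * A) • (m : V) = e • (A • (m : V)) from mul_smul _ _ _, hA]
      exact u.2.symm
    rw [e_mul_mul_e] at hu
    have : u = (A i₀ i₀) • m := Subtype.ext (by rw [smul_coe]; exact hu)
    rw [this]
    exact W.smul_mem _ hmW
  -- G is faithful
  haveI hGfaith : FaithfulSMul S G := by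
    constructor
    intro s t hst
    have key : ∀ v : V, Matrix.single i₀ i₀ s • v = Matrix.single i₀ i₀ t • v := by
      intro v
      have hv : e • (e • v) = e • v := by rw [← mul_smul, he2]
      have := hst ⟨e • v, hv⟩
      have h2 : Matrix.single i₀ i₀ s • (e • v) = Matrix.single i₀ i₀ t • (e • v) := by
        simpa [Subtype.ext_iff, smul_coe] using this
      rwa [← mul_smul, ← mul_smul, he, hE, hE, mul_one, mul_one] at h2
    have := hf.eq_of_smul_eq_smul key
    have := congrFun (congrFun this i₀) i₀
    simpa [Matrix.single] using this
  -- shrink G to universe u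
  haveI : Small.{u} (Matrix n n S) := small_map (Matrix.of.symm : Matrix n n S ≃ (n → n → S))
  haveI : Small.{u} V := by
    rcases exists_ne (0 : V) with ⟨v, hv⟩
    have hspan : Submodule.span (Matrix n n S) {v} = ⊤ := by
      rcases eq_bot_or_eq_top (Submodule.span (Matrix n n S) {v}) with h | h
      · exact absurd (h ▸ Submodule.mem_span_singleton_self v) (by simp [hv])
      · exact h
    refine small_of_surjective (f := fun A : Matrix n n S => A • v) ?_
    intro x
    exact Submodule.mem_span_singleton.1 (hspan ▸ Submodule.mem_top : x ∈ _)
  haveI : Small.{u} G := small_of_injective (Subtype.val_injective (p := fun v => v ∈ G))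
  refine ⟨Shrink.{u} G, inferInstance, inferInstance, ?_, ?_⟩
  · exact IsSimpleModule.congr (Shrink.linearEquiv S G)
  · constructor
    intro s t hst
    refine hGfaith.eq_of_smul_eq_smul (fun g => ?_)
    have := hst (equivShrink G g)
    have h2 := congrArg (Shrink.linearEquiv S G) this
    rwa [_root_.map_smul, _root_.map_smul, show ((Shrink.linearEquiv S G) (equivShrink G g)) = g from
      (equivShrink G).symm_apply_apply g] at h2
end Corner

section MinIdeal
variable {S : Type u} [Ring S] {n : Type v} [Fintype n] [DecidableEq n] [Nonempty n]

lemma span_singleton_eq_of_atom {L : Submodule S S} (hL : IsAtom L) {x : S} (hx : x ∈ L)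
    (hx0 : x ≠ 0) : Submodule.span S {x} = L := by
  have hle : Submodule.span S {x} ≤ L := (Submodule.span_singleton_le_iff_mem x L).2 hx
  rcases hle.lt_or_eq with h | h
  · exfalso
    have hb := hL.2 (Submodule.span S {x}) h
    have hm : x ∈ Submodule.span S {x} := Submodule.mem_span_singleton_self x
    rw [hb] at hm
    exact hx0 (by simpa using hm)
  · exact h

theorem hasMinimalLeftIdeal_matrix_of (h : HasMinimalLeftIdeal S) :
    HasMinimalLeftIdeal (Matrix n n S) := by
  classical
  obtain ⟨L, hL⟩ := h
  obtain ⟨j₀⟩ := ‹Nonempty n›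
  obtain ⟨x, hxL, hx0⟩ := Submodule.exists_mem_ne_zero_of_ne_bot hL.1
  -- matrices supported on column j₀ with entries in L
  let C : Submodule (Matrix n n S) (Matrix n n S) :=
    { carrier := {M | (∀ i, M i j₀ ∈ L) ∧ ∀ i j, j ≠ j₀ → M i j = 0}
      add_mem' := fun {a b} ha hb =>
        ⟨fun i => L.add_mem (ha.1 i) (hb.1 i),
         fun i j hj => by show a i j + b i j = 0; rw [ha.2 i j hj, hb.2 i j hj, add_zero]⟩
      zero_mem' := ⟨fun i => L.zero_mem, fun i j _ => rfl⟩
      smul_mem' := fun A M hM => by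
        constructor
        · intro i
          show (A * M) i j₀ ∈ L
          rw [mul_apply]
          exact Submodule.sum_mem _ (fun k _ => L.smul_mem (A i k) (hM.1 k))
        · intro i j hj
          show (A * M) i j = 0
          rw [mul_apply]
          exact Finset.sum_eq_zero (fun k _ => by rw [hM.2 k j hj, mul_zero]) }
  have memC : ∀ M : Matrix n n S,
      M ∈ C ↔ (∀ i, M i j₀ ∈ L) ∧ ∀ i j, j ≠ j₀ → M i j = 0 := fun M => Iff.rfl
  have hstdC : ∀ (i : n) (y : S), y ∈ L → Matrix.single i j₀ y ∈ C := by
    intro i y hy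
    rw [memC]
    constructor
    · intro k
      by_cases hk : k = i
      · subst hk; simpa [Matrix.single] using hy
      · simp [Matrix.single, Ne.symm hk]
    · intro k l hl
      simp [Matrix.single, Ne.symm hl]
  refine ⟨C, ?_, ?_⟩
  · -- C ≠ ⊥
    intro hC
    have : Matrix.single (Classical.arbitrary n) j₀ x ∈ C := hstdC _ x hxL
    rw [hC] at this
    apply hx0
    have := congrFun (congrFun (this : _ = (0 : Matrix n n S)) (Classical.arbitrary n)) j₀
    simpa [Matrix.single] using this
  · -- minimality
    intro B hB
    by_contra hB0
    obtain ⟨M, hMB, hM0⟩ := Submodule.exists_mem_ne_zero_of_ne_bot hB0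
    have hMC : M ∈ C := le_of_lt hB hMB
    -- find a nonzero entry; it must be in column j₀
    obtain ⟨i₁, j₁, hij⟩ : ∃ i j, M i j ≠ 0 := by
      by_contra hc
      push_neg at hc
      exact hM0 (by ext i j; exact hc i j)
    have hj₁ : j₁ = j₀ := by
      by_contra hne
      exact hij ((memC M).1 hMC |>.2 i₁ j₁ hne)
    rw [hj₁] at hij
    set y := M i₁ j₀ with hy
    have hyL : y ∈ L := (memC M).1 hMC |>.1 i₁
    -- every Matrix.single k j₀ z with z ∈ L lies in B
    have hstd : ∀ (k : n) (z : S), z ∈ L → Matrix.single k j₀ z ∈ B := by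
      intro k z hz
      -- first: Matrix.single k j₀ y ∈ B
      have h1 : Matrix.single k i₁ (1 : S) • M = Matrix.single k j₀ y := by
        ext a b
        show (Matrix.single k i₁ (1 : S) * M) a b = _
        rw [mul_apply]
        rcases eq_or_ne a k with rfl | ha
        · rw [Finset.sum_eq_single i₁]
          · rcases eq_or_ne b j₀ with rfl | hb
            · simp [Matrix.single, hy]
            · rw [(memC M).1 hMC |>.2 i₁ b hb]
              simp [Matrix.single, Ne.symm hb]
          · intro l _ hl
            simp [Matrix.single, Ne.symm hl]
          · simp
        · rw [Finset.sum_eq_zero]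
          · simp [Matrix.single, Ne.symm ha]
          · intro l _
            simp [Matrix.single, Ne.symm ha]
      have hkB : Matrix.single k j₀ y ∈ B := h1 ▸ B.smul_mem _ hMB
      -- z = s * y for some s
      have : z ∈ Submodule.span S {y} := by
        rw [span_singleton_eq_of_atom hL hyL (hy ▸ hij)]
        exact hz
      obtain ⟨s, hs⟩ := Submodule.mem_span_singleton.1 this
      have h2 : Matrix.single k k s • Matrix.single k j₀ y = Matrix.single k j₀ z := by
        show Matrix.single k k s * Matrix.single k j₀ y = _
        rw [Matrix.single_mul_single_same]
        rw [show s * y = z from hs]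
      exact h2 ▸ B.smul_mem _ hkB
    -- hence C ≤ B, contradicting B < C
    have hCB : C ≤ B := by
      intro N hN
      have hrep : N = ∑ k, Matrix.single k j₀ (N k j₀) := by
        ext a b
        rw [Matrix.sum_apply]
        rcases eq_or_ne b j₀ with rfl | hb
        · rw [Finset.sum_eq_single a]
          · simp [Matrix.single]
          · intro l _ hl; simp [Matrix.single, hl]
          · simp
        · rw [(memC N).1 hN |>.2 a b hb, Finset.sum_eq_zero]
          intro l _
          simp [Matrix.single, Ne.symm hb]
      rw [hrep]
      exact Submodule.sum_mem _ (fun k _ => hstd k (N k j₀) ((memC N).1 hN |>.1 k))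
    exact absurd (lt_of_lt_of_le hB hCB).false id

theorem hasMinimalLeftIdeal_of_matrix (h : HasMinimalLeftIdeal (Matrix n n S)) :
    HasMinimalLeftIdeal S := by
  classical
  obtain ⟨J, hJ⟩ := h
  obtain ⟨M₀, hM₀J, hM₀⟩ := Submodule.exists_mem_ne_zero_of_ne_bot hJ.1
  obtain ⟨i₀, j₀, hij⟩ : ∃ i j, M₀ i j ≠ 0 := by
    by_contra hc
    push_neg at hc
    exact hM₀ (by ext i j; exact hc i j)
  -- entries at (i₀, j₀) of members of J
  let L : Submodule S S :=
    { carrier := {m | ∃ N ∈ J, N i₀ j₀ = m}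
      add_mem' := by
        rintro a b ⟨N, hN, hNa⟩ ⟨P, hP, hPb⟩
        exact ⟨N + P, J.add_mem hN hP, by rw [Matrix.add_apply, hNa, hPb]⟩
      zero_mem' := ⟨0, J.zero_mem, rfl⟩
      smul_mem' := by
        rintro s m ⟨N, hN, hNm⟩
        refine ⟨Matrix.single i₀ i₀ s • N, J.smul_mem _ hN, ?_⟩
        show (Matrix.single i₀ i₀ s * N) i₀ j₀ = s • m
        rw [mul_apply, Finset.sum_eq_single i₀]
        · simp [Matrix.single, hNm]
        · intro l _ hl; simp [Matrix.single, Ne.symm hl]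
        · simp }
  refine ⟨L, ?_, ?_⟩
  · intro hbot
    have : M₀ i₀ j₀ ∈ L := ⟨M₀, hM₀J, rfl⟩
    rw [hbot] at this
    exact hij (by simpa using this)
  · intro L' hL'
    by_contra hL'0
    obtain ⟨y, hyL', hy0⟩ := Submodule.exists_mem_ne_zero_of_ne_bot hL'0
    obtain ⟨N, hNJ, hNy⟩ : ∃ N ∈ J, N i₀ j₀ = y := le_of_lt hL' hyL'
    -- N' := row i₀ of N, placed at row i₀
    set N' : Matrix n n S := Matrix.single i₀ i₀ (1 : S) * N with hN'
    have hN'J : N' ∈ J := J.smul_mem _ hNJ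
    have hN'app : ∀ b, N' i₀ b = N i₀ b := by
      intro b
      rw [hN', mul_apply, Finset.sum_eq_single i₀]
      · simp [Matrix.single]
      · intro l _ hl; simp [Matrix.single, Ne.symm hl]
      · simp
    have hN'row : ∀ a b, a ≠ i₀ → N' a b = 0 := by
      intro a b ha
      rw [hN', mul_apply, Finset.sum_eq_zero]
      intro l _
      simp [Matrix.single, Ne.symm ha]
    have hN'0 : N' ≠ 0 := by
      intro hc
      apply hy0
      rw [← hNy, ← hN'app j₀, hc]
      rfl
    -- span of N' is J
    have hspan : Submodule.span (Matrix n n S) {N'} = J := by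
      have hle : Submodule.span (Matrix n n S) {N'} ≤ J :=
        (Submodule.span_singleton_le_iff_mem N' J).2 hN'J
      rcases hle.lt_or_eq with hlt | heq
      · exfalso
        have hb := hJ.2 (Submodule.span (Matrix n n S) {N'}) hlt
        have hm : N' ∈ Submodule.span (Matrix n n S) {N'} := Submodule.mem_span_singleton_self N'
        rw [hb] at hm
        exact hN'0 (by simpa using hm)
      · exact heq
    -- every element of L is a multiple of y, hence in L'
    have : L ≤ L' := by
      rintro m ⟨P, hPJ, hPm⟩
      have : P ∈ Submodule.span (Matrix n n S) {N'} := hspan ▸ hPJ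
      obtain ⟨A, hA⟩ := Submodule.mem_span_singleton.1 this
      have : P i₀ j₀ = A i₀ i₀ * y := by
        rw [← hA]
        show (A * N') i₀ j₀ = _
        rw [mul_apply, Finset.sum_eq_single i₀]
        · rw [hN'app, hNy]
        · intro l _ hl; rw [hN'row l j₀ hl, mul_zero]
        · simp
      have hm : m = A i₀ i₀ • y := by rw [← hPm, this]; rfl
      rw [hm]
      exact L'.smul_mem _ hyL'
    exact absurd (lt_of_lt_of_le hL' this).false id
end MinIdeal


/-- Let `R` be a unital ring and `n` a nonempty finite index type.  Then `R` is CCR if and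
only if the ring of `n × n` matrices over `R` is CCR. -/
theorem isCCRRing_matrix_iff (R : Type u) [Ring R] (n : Type v) [Fintype n] [Nonempty n]
    [DecidableEq n] :
    IsCCRRing R ↔ IsCCRRing (Matrix n n R) := by
  obtain ⟨i₀⟩ := (inferInstance : Nonempty n)
  constructor
  · intro hR P hP
    have hPI : P = ((TwoSidedIdeal.equivMatrix (n := n)).symm P).matrix n := by
      conv_lhs => rw [← (TwoSidedIdeal.equivMatrix (n := n)).apply_symm_apply P]
      rw [TwoSidedIdeal.equivMatrix_apply]
    set I : TwoSidedIdeal R := (TwoSidedIdeal.equivMatrix (n := n)).symm P with hI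
    clear_value I
    subst hPI
    let e := matricesOverQuotEquiv (n := n) I
    have hprimmat : IsPrimitiveRing (Matrix n n I.ringCon.Quotient) :=
      isPrimitiveRing_of_ringEquiv e hP
    have hprim : IsPrimitiveRing I.ringCon.Quotient := isPrimitiveRing_of_matrix hprimmat
    obtain ⟨hsimp, hmin⟩ := hR I hprim
    constructor
    · refine isSimpleRing_of_ringEquiv e.symm ?_
      haveI := hsimp
      infer_instance
    · exact hasMinimalLeftIdeal_of_ringEquiv e.symm (hasMinimalLeftIdeal_matrix_of hmin)
  · intro hM I hI
    let e := matricesOverQuotEquiv (n := n) I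
    have hprimmat : IsPrimitiveRing (Matrix n n I.ringCon.Quotient) :=
      isPrimitiveRing_matrix_of hI
    have hprimP : IsPrimitiveRing (I.matrix n).ringCon.Quotient :=
      isPrimitiveRing_of_ringEquiv e.symm hprimmat
    obtain ⟨hs, hm⟩ := hM (I.matrix n) hprimP
    constructor
    · have hmatsimp : IsSimpleRing (Matrix n n I.ringCon.Quotient) :=
        isSimpleRing_of_ringEquiv e hs
      haveI := hmatsimp.simple
      exact ⟨(TwoSidedIdeal.orderIsoMatrix (n := n)).isSimpleOrder⟩
    · exact hasMinimalLeftIdeal_of_matrix (hasMinimalLeftIdeal_of_ringEquiv e hm)
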